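/- Let g ∈ 𝒮(ℝ) be a Schwartz function with g'(x) > −1 for all x, so that φ(x) = x + g(x) is a diffeomorphism of ℝ. If moreover g'(x) ≥ −1+ε for some ε > 0, then the inverse diffeomorphism has the form φ⁻¹(y) = y + h(y) where h is again a Schwartz function. -/

import Mathlib

open Finset
open scoped ContDiff

lemma aux_uniform_bound {v : ℕ → ℝ → ℝ} (h : ∀ i, ∃ C, ∀ x, v i x ≤ C) (n : ℕ) :
    ∃ C, 0 ≤ C ∧ ∀ i ≤ n, ∀ x, v i x ≤ C := by
  induction n with
  | zero =>
    obtain ⟨C, hC⟩ := h 0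
    exact ⟨max C 0, le_max_right _ _, fun i hi x => by
      interval_cases i; exact (hC x).trans (le_max_left _ _)⟩
  | succ n ih =>
    obtain ⟨C, hC0, hC⟩ := ih
    obtain ⟨C', hC'⟩ := h (n + 1)
    refine ⟨max C C', hC0.trans (le_max_left _ _), fun i hi x => ?_⟩
    rcases Nat.lt_succ_iff_lt_or_eq.mp (Nat.lt_succ_of_le hi) with h' | h'
    · exact (hC i (Nat.lt_succ_iff.mp h') x).trans (le_max_left _ _)
    · subst h'; exact (hC' x).trans (le_max_right _ _)

lemma aux_mul_bound {f₁ f₂ : ℝ → ℝ} (h₁s : ContDiff ℝ ∞ f₁) (h₂s : ContDiff ℝ ∞ f₂)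
    {n : ℕ} {C₁ C₂ : ℝ} (hC₁ : 0 ≤ C₁) (hC₂ : 0 ≤ C₂)
    (h₁ : ∀ i ≤ n, ∀ x, ‖iteratedFDeriv ℝ i f₁ x‖ ≤ C₁)
    (h₂ : ∀ i ≤ n, ∀ x, ‖iteratedFDeriv ℝ i f₂ x‖ ≤ C₂) :
    ∀ i ≤ n, ∀ x, ‖iteratedFDeriv ℝ i (fun x => f₁ x * f₂ x) x‖ ≤ 2 ^ n * C₁ * C₂ := by
  intro i hi x
  calc ‖iteratedFDeriv ℝ i (fun x => f₁ x * f₂ x) x‖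
      ≤ ∑ j ∈ range (i + 1), (i.choose j : ℝ) * ‖iteratedFDeriv ℝ j f₁ x‖ *
          ‖iteratedFDeriv ℝ (i - j) f₂ x‖ :=
        norm_iteratedFDeriv_mul_le h₁s h₂s x (by exact_mod_cast le_top)
    _ ≤ ∑ j ∈ range (i + 1), (i.choose j : ℝ) * C₁ * C₂ := by
        refine Finset.sum_le_sum fun j hj => ?_
        have hj' : j ≤ i := Nat.lt_succ_iff.mp (mem_range.mp hj)
        gcongr
        · exact h₁ j (hj'.trans hi) x
        · exact h₂ (i - j) ((Nat.sub_le i j).trans hi) x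
    _ = (2 : ℝ) ^ i * C₁ * C₂ := by
        rw [← Finset.sum_mul, ← Finset.sum_mul]
        norm_cast
        rw [Nat.sum_range_choose]
    _ ≤ 2 ^ n * C₁ * C₂ := by
        have : (2:ℝ)^i ≤ 2^n := by
          apply pow_le_pow_right₀ (by norm_num) hi
        gcongr

/-- If `g` is a Schwartz function with `g' > −1` everywhere (so `φ(x) = x + g(x)` is an
orientation-preserving diffeomorphism of `ℝ`) and moreover `g' ≥ −1 + ε` for some
`ε > 0`, then the inverse diffeomorphism is of the form `y ↦ y + h(y)` with `h` again
a Schwartz function. -/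
theorem schwartz_diffeo_inverse (g : SchwartzMap ℝ ℝ) (ε : ℝ) (hε : 0 < ε)
    (hg : ∀ x : ℝ, -1 < deriv (g : ℝ → ℝ) x)
    (hgε : ∀ x : ℝ, -1 + ε ≤ deriv (g : ℝ → ℝ) x) :
    ∃ h : SchwartzMap ℝ ℝ,
      Function.LeftInverse (fun y => y + h y) (fun x => x + g x) ∧
      Function.RightInverse (fun y => y + h y) (fun x => x + g x) := by
  -- basic objects
  set u : ℝ → ℝ := deriv (g : ℝ → ℝ) with hu_def
  have hu_eps : ∀ x, ε ≤ 1 + u x := fun x => by have := hgε x; simp only [hu_def]; linarith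
  have hu_pos : ∀ x, 0 < 1 + u x := fun x => lt_of_lt_of_le hε (hu_eps x)
  have hu_smooth : ContDiff ℝ ∞ u := by
    have h1 := (SchwartzMap.derivCLM ℝ (F := ℝ) g).smooth'
    have h2 : ⇑(SchwartzMap.derivCLM ℝ (F := ℝ) g) = u := by
      funext x; exact SchwartzMap.derivCLM_apply ℝ g x
    exact h2 ▸ h1
  -- φ
  set φ : ℝ → ℝ := fun x => x + g x with hφ_def
  have hφ_smooth : ContDiff ℝ ∞ φ := contDiff_id.add g.smooth'
  have hφ_deriv : ∀ x, HasDerivAt φ (1 + u x) x := fun x =>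
    (hasDerivAt_id x).add g.differentiableAt.hasDerivAt
  -- bound on g
  obtain ⟨Cg, -, hCg⟩ := g.decay 0 0
  have hCg' : ∀ x, ‖g x‖ ≤ Cg := fun x => by
    have := hCg x; simpa [norm_iteratedFDeriv_zero] using this
  have hCg0 : 0 ≤ Cg := le_trans (norm_nonneg _) (hCg' 0)
  -- φ strictly monotone and surjective
  have hφ_mono : StrictMono φ := strictMono_of_deriv_pos fun x => by
    rw [(hφ_deriv x).deriv]; exact hu_pos x
  have hφ_surj : Function.Surjective φ := by
    intro y
    have h1 : φ (y - Cg) ≤ y := by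
      have := abs_le.mp (hCg' (y - Cg))
      simp only [hφ_def]
      have : g (y - Cg) ≤ Cg := (abs_le.mp (hCg' (y - Cg))).2
      linarith
    have h2 : y ≤ φ (y + Cg) := by
      have : -Cg ≤ g (y + Cg) := (abs_le.mp (hCg' (y + Cg))).1
      simp only [hφ_def]; linarith
    have hsub : Set.Icc (φ (y - Cg)) (φ (y + Cg)) ⊆ φ '' Set.Icc (y - Cg) (y + Cg) :=
      intermediate_value_Icc (by linarith) hφ_smooth.continuous.continuousOn
    obtain ⟨x, _, hx⟩ := hsub ⟨h1, h2⟩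
    exact ⟨x, hx⟩
  -- the inverse ψ
  set e := StrictMono.orderIsoOfSurjective φ hφ_mono hφ_surj with he_def
  set ψ : ℝ → ℝ := fun y => e.symm y with hψ_def
  have hφψ : ∀ y, φ (ψ y) = y := fun y => e.apply_symm_apply y
  have hψφ : ∀ x, ψ (φ x) = x := fun x => e.symm_apply_apply x
  have hψ_cont : Continuous ψ := (OrderIso.toHomeomorph e.symm).continuous
  have hψ_deriv : ∀ y, HasDerivAt ψ ((1 + u (ψ y))⁻¹) y := fun y =>
    HasDerivAt.of_local_left_inverse hψ_cont.continuousAt (hφ_deriv (ψ y))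
      (ne_of_gt (hu_pos (ψ y))) (Filter.Eventually.of_forall hφψ)
  -- F
  set F : ℝ → ℝ := fun x => (1 + u x)⁻¹ with hF_def
  have hF_smooth : ContDiff ℝ ∞ F := (contDiff_const.add hu_smooth).inv fun x =>
    ne_of_gt (hu_pos x)
  have hderiv_ψ : deriv ψ = fun y => F (ψ y) := funext fun y => (hψ_deriv y).deriv
  -- smoothness of ψ
  have hψ_smooth : ContDiff ℝ ∞ ψ := by
    rw [contDiff_infty]
    intro n
    induction n with
    | zero => exact contDiff_zero.mpr hψ_cont
    | succ n ih =>
      rw [show ((n + 1 : ℕ) : WithTop ℕ∞) = (n : WithTop ℕ∞) + 1 by norm_cast,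
        contDiff_succ_iff_deriv]
      refine ⟨fun y => (hψ_deriv y).differentiableAt, ?_, ?_⟩
      · intro h; simp at h
      · rw [hderiv_ψ]
        exact (hF_smooth.of_le (by exact_mod_cast le_top)).comp ih
  -- Schwartz functions have uniformly bounded derivatives
  have schwartz_bdd : ∀ (f : SchwartzMap ℝ ℝ) (n : ℕ), ∃ C, 0 ≤ C ∧
      ∀ i ≤ n, ∀ x, ‖iteratedFDeriv ℝ i (⇑f) x‖ ≤ C := by
    intro f n
    apply aux_uniform_bound (v := fun i x => ‖iteratedFDeriv ℝ i (⇑f) x‖)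
    intro i
    obtain ⟨C, -, hC⟩ := f.decay 0 i
    exact ⟨C, fun x => by simpa using hC x⟩
  -- the function g₂ = -g'' as a Schwartz map
  set g₂ : SchwartzMap ℝ ℝ := -(SchwartzMap.derivCLM ℝ ℝ (SchwartzMap.derivCLM ℝ ℝ g)) with hg₂_def
  have hg₂ : ⇑g₂ = fun x => -(deriv u x) := by
    funext x
    rfl
  -- derivative of F
  have hF_deriv : deriv F = fun x => g₂ x * (F x * F x) := by
    funext x
    have h1 : HasDerivAt (fun x => 1 + u x) (deriv u x) x :=
      ((hu_smooth.differentiable (by simp)).differentiableAt.hasDerivAt).const_add 1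
    have h2 := h1.inv (ne_of_gt (hu_pos x))
    rw [show deriv F = deriv (fun x => (1 + u x)⁻¹) from rfl] at *
    rw [HasDerivAt.deriv (f := fun x => (1 + u x)⁻¹) h2, hg₂]
    show -deriv u x / (1 + u x) ^ 2 = -deriv u x * ((1 + u x)⁻¹ * (1 + u x)⁻¹)
    rw [div_eq_mul_inv, sq, mul_inv]
  -- bounded derivatives of F
  have hFbdd : ∀ n, ∃ C, 0 ≤ C ∧ ∀ i ≤ n, ∀ x, ‖iteratedFDeriv ℝ i F x‖ ≤ C := by
    intro n
    induction n with
    | zero =>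
      refine ⟨ε⁻¹, by positivity, fun i hi x => ?_⟩
      interval_cases i
      rw [norm_iteratedFDeriv_zero, hF_def, Real.norm_eq_abs,
        abs_of_pos (inv_pos.mpr (hu_pos x))]
      exact (inv_le_inv₀ (hu_pos x) hε).mpr (hu_eps x)
    | succ n ih =>
      obtain ⟨C, hC0, hC⟩ := ih
      obtain ⟨B, hB0, hB⟩ := schwartz_bdd g₂ n
      have hFF := aux_mul_bound hF_smooth hF_smooth hC0 hC0 hC hC
      have hprod := aux_mul_bound g₂.smooth' (hF_smooth.mul hF_smooth) hB0
        (by positivity) hB hFF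
      refine ⟨max C (2 ^ n * B * (2 ^ n * C * C)), hC0.trans (le_max_left _ _),
        fun i hi x => ?_⟩
      rcases Nat.lt_succ_iff_lt_or_eq.mp (Nat.lt_succ_of_le hi) with h' | h'
      · exact (hC i (Nat.lt_succ_iff.mp h') x).trans (le_max_left _ _)
      · subst h'
        calc ‖iteratedFDeriv ℝ (n + 1) F x‖ = ‖iteratedDeriv (n + 1) F x‖ :=
              norm_iteratedFDeriv_eq_norm_iteratedDeriv
          _ = ‖iteratedDeriv n (deriv F) x‖ := by rw [iteratedDeriv_succ']
          _ = ‖iteratedFDeriv ℝ n (fun x => g₂ x * (F x * F x)) x‖ := by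
              rw [hF_deriv, ← norm_iteratedFDeriv_eq_norm_iteratedDeriv]
          _ ≤ 2 ^ n * B * (2 ^ n * C * C) := hprod n le_rfl x
          _ ≤ _ := le_max_right _ _
  -- bounded derivatives of ψ (orders ≥ 1)
  have hψbdd : ∀ n, ∃ D, 1 ≤ D ∧ ∀ i, 1 ≤ i → i ≤ n → ∀ y,
      ‖iteratedFDeriv ℝ i ψ y‖ ≤ D := by
    intro n
    induction n with
    | zero => exact ⟨1, le_rfl, fun i h1 h2 y => absurd (h1.trans h2) (by norm_num)⟩
    | succ n ih =>
      obtain ⟨D, hD1, hD⟩ := ih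
      obtain ⟨C, hC0, hC⟩ := hFbdd n
      refine ⟨max D (max 1 (n.factorial * C * D ^ n)), hD1.trans (le_max_left _ _),
        fun i h1 hi y => ?_⟩
      rcases Nat.lt_succ_iff_lt_or_eq.mp (Nat.lt_succ_of_le hi) with h' | h'
      · exact (hD i h1 (Nat.lt_succ_iff.mp h') y).trans (le_max_left _ _)
      · subst h'
        have hcomp := norm_iteratedFDeriv_comp_le (n := n) hF_smooth hψ_smooth
          (by exact_mod_cast le_top) y (C := C) (D := D)
          (fun j hj => hC j hj (ψ y))
          (fun j hj1 hj2 => (hD j hj1 hj2 y).trans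
            (le_self_pow₀ hD1 (by omega)))
        calc ‖iteratedFDeriv ℝ (n + 1) ψ y‖ = ‖iteratedDeriv (n + 1) ψ y‖ :=
              norm_iteratedFDeriv_eq_norm_iteratedDeriv
          _ = ‖iteratedDeriv n (deriv ψ) y‖ := by rw [iteratedDeriv_succ']
          _ = ‖iteratedFDeriv ℝ n (F ∘ ψ) y‖ := by
              rw [hderiv_ψ, ← norm_iteratedFDeriv_eq_norm_iteratedDeriv]
              rfl
          _ ≤ n.factorial * C * D ^ n := hcomp
          _ ≤ _ := (le_max_right _ _).trans (le_max_right _ _)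
  -- linear growth of ψ
  have hψeq : ∀ y, ψ y + g (ψ y) = y := fun y => hφψ y
  have hψ_lin : ∀ y, ‖ψ y‖ ≤ ‖y‖ + Cg := by
    intro y
    calc ‖ψ y‖ = ‖y - g (ψ y)‖ := by nth_rewrite 1 [show ψ y = y - g (ψ y) by linarith [hψeq y]]; rfl
      _ ≤ ‖y‖ + ‖g (ψ y)‖ := norm_sub_le _ _
      _ ≤ ‖y‖ + Cg := by gcongr; exact hCg' _
  -- temperate growth of ψ
  have hψ_temp : Function.HasTemperateGrowth ψ := by
    refine ⟨hψ_smooth, fun n => ?_⟩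
    obtain ⟨D, hD1, hD⟩ := hψbdd n
    refine ⟨1, max (1 + Cg) D, fun y => ?_⟩
    have hy : (0:ℝ) ≤ ‖y‖ := norm_nonneg y
    rcases Nat.eq_zero_or_pos n with hn | hn
    · subst hn
      rw [norm_iteratedFDeriv_zero, pow_one]
      have h1 := hψ_lin y
      have h2 : (1 + Cg) ≤ max (1 + Cg) D := le_max_left _ _
      nlinarith
    · have h1 := hD n hn le_rfl y
      have h2 : D ≤ max (1 + Cg) D := le_max_right _ _
      rw [pow_one]
      nlinarith
  -- growth lower bound
  have hup : ∃ (k : ℕ) (C : ℝ), ∀ y, ‖y‖ ≤ C * (1 + ‖ψ y‖) ^ k := by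
    refine ⟨1, 1 + Cg, fun y => ?_⟩
    have hy : (0:ℝ) ≤ ‖ψ y‖ := norm_nonneg _
    calc ‖y‖ = ‖ψ y + g (ψ y)‖ := by rw [hψeq y]
      _ ≤ ‖ψ y‖ + ‖g (ψ y)‖ := norm_add_le _ _
      _ ≤ ‖ψ y‖ + Cg := by gcongr; exact hCg' _
      _ ≤ (1 + Cg) * (1 + ‖ψ y‖) ^ 1 := by rw [pow_one]; nlinarith
  -- conclusion
  set h : SchwartzMap ℝ ℝ := -(SchwartzMap.compCLM (𝕜 := ℝ) hψ_temp hup g) with hh_def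
  have hh : ∀ y, h y = -(g (ψ y)) := by
    intro y
    rfl
  refine ⟨h, ?_, ?_⟩
  · intro x
    have h1 : ψ (x + g x) = x := hψφ x
    show (x + g x) + h (x + g x) = x
    rw [hh, h1]
    ring
  · intro y
    have h3 : y + -(g (ψ y)) = ψ y := by linarith [hψeq y]
    show (y + h y) + g (y + h y) = y
    rw [hh y, h3]
    exact hψeq y
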